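/- Let α > 0 and T > 0, and let u(t) = e^{−αt} − e^{−α(T−t)} be the antisymmetric mode. Then ∫₀^T u′(t)² dt = α² · (sinh(αT) + αT)/(sinh(αT) − αT) · ∫₀^T u(t)² dt, where u′ denotes the derivative of u. -/

import Mathlib

set_option maxHeartbeats 800000


open Real

/-- For the antisymmetric mode `u(t) = e^{−αt} − e^{−α(T−t)}` with `α, T > 0`,
`∫₀^T u′(t)² dt = α² (sinh(αT) + αT)/(sinh(αT) − αT) ∫₀^T u(t)² dt`. -/
theorem antisymmetric_mode_energy_ratio (α T : ℝ) (hα : 0 < α) (hT : 0 < T)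
    (u : ℝ → ℝ) (hu : u = fun t => Real.exp (-α*t) - Real.exp (-α*(T-t))) :
    ∫ t in (0:ℝ)..T, (deriv u t)^2
      = α^2 * ((Real.sinh (α*T) + α*T) / (Real.sinh (α*T) - α*T))
        * ∫ t in (0:ℝ)..T, (u t)^2 := by
  subst hu
  -- derivative of inner functions
  have hd : ∀ t : ℝ, HasDerivAt (fun t => Real.exp (-α*t) - Real.exp (-α*(T-t)))
      (-α * Real.exp (-α*t) - α * Real.exp (-α*(T-t))) t := by
    intro t
    have h1 : HasDerivAt (fun t : ℝ => Real.exp (-α*t)) (Real.exp (-α*t) * (-α)) t := by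
      simpa using ((hasDerivAt_id t).const_mul (-α)).exp
    have h2 : HasDerivAt (fun t : ℝ => Real.exp (-α*(T-t)))
        (Real.exp (-α*(T-t)) * (-α * (0 - 1))) t :=
      (((hasDerivAt_const t T).sub (hasDerivAt_id t)).const_mul (-α)).exp
    exact (h1.sub h2).congr_deriv (by ring)
  have hderiv : deriv (fun t => Real.exp (-α*t) - Real.exp (-α*(T-t)))
      = fun t => -α * Real.exp (-α*t) - α * Real.exp (-α*(T-t)) := by
    funext t; exact (hd t).deriv
  rw [hderiv]
  -- exp product identities
  have hmul : ∀ t : ℝ, Real.exp (-α*t) * Real.exp (-α*(T-t)) = Real.exp (-α*T) := by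
    intro t; rw [← Real.exp_add]; ring_nf
  have hsq1 : ∀ t : ℝ, Real.exp (-α*t) * Real.exp (-α*t) = Real.exp (-(2*α)*t) := by
    intro t; rw [← Real.exp_add]; ring_nf
  have hsq2 : ∀ t : ℝ, Real.exp (-α*(T-t)) * Real.exp (-α*(T-t))
      = Real.exp (-(2*α)*(T-t)) := by
    intro t; rw [← Real.exp_add]; ring_nf
  -- integral of (u')^2
  have hI1 : (∫ t in (0:ℝ)..T, (-α * Real.exp (-α*t) - α * Real.exp (-α*(T-t)))^2)
      = 2*α*Real.exp (-α*T)*(Real.sinh (α*T) + α*T) := by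
    have hF : ∀ t ∈ Set.uIcc (0:ℝ) T, HasDerivAt
        (fun t => -(α/2) * Real.exp (-(2*α)*t) + 2*α^2*Real.exp (-α*T)*t
          + (α/2) * Real.exp (-(2*α)*(T-t)))
        ((-α * Real.exp (-α*t) - α * Real.exp (-α*(T-t)))^2) t := by
      intro t _
      have h1 : HasDerivAt (fun t : ℝ => Real.exp (-(2*α)*t))
          (Real.exp (-(2*α)*t) * (-(2*α))) t := by
        simpa using ((hasDerivAt_id t).const_mul (-(2*α))).exp
      have h2 : HasDerivAt (fun t : ℝ => Real.exp (-(2*α)*(T-t)))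
          (Real.exp (-(2*α)*(T-t)) * (-(2*α) * (0 - 1))) t :=
        (((hasDerivAt_const t T).sub (hasDerivAt_id t)).const_mul (-(2*α))).exp
      have := ((h1.const_mul (-(α/2))).add
        (((hasDerivAt_id t).const_mul (2*α^2*Real.exp (-α*T))))).add
        (h2.const_mul (α/2))
      refine this.congr_deriv ?_
      have e1 := hsq1 t
      have e2 := hsq2 t
      have e3 := hmul t
      ring_nf
      ring_nf at e1 e2 e3
      nlinarith [e1, e2, e3]
    have hcont : IntervalIntegrable
        (fun t => (-α * Real.exp (-α*t) - α * Real.exp (-α*(T-t)))^2)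
        MeasureTheory.volume 0 T := by
      apply Continuous.intervalIntegrable
      fun_prop
    rw [intervalIntegral.integral_eq_sub_of_hasDerivAt hF hcont]
    have hs : Real.sinh (α*T) = (Real.exp (α*T) - Real.exp (-(α*T)))/2 := Real.sinh_eq _
    have he : Real.exp (-(2*α)*T) = Real.exp (-α*T) * Real.exp (-α*T) := by
      rw [← Real.exp_add]; ring_nf
    have he2 : Real.exp (-α*T) * Real.exp (α*T) = 1 := by
      rw [← Real.exp_add]; simp
    rw [hs]
    have : Real.exp (-(α*T)) = Real.exp (-α*T) := by ring_nf
    rw [this]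
    simp only [sub_self, sub_zero, mul_zero, Real.exp_zero, he]
    linear_combination (-α) * he2
  -- integral of u^2
  have hI2 : (∫ t in (0:ℝ)..T, (Real.exp (-α*t) - Real.exp (-α*(T-t)))^2)
      = (2*Real.exp (-α*T)/α)*(Real.sinh (α*T) - α*T) := by
    have hF : ∀ t ∈ Set.uIcc (0:ℝ) T, HasDerivAt
        (fun t => -(1/(2*α)) * Real.exp (-(2*α)*t) - 2*Real.exp (-α*T)*t
          + (1/(2*α)) * Real.exp (-(2*α)*(T-t)))
        ((Real.exp (-α*t) - Real.exp (-α*(T-t)))^2) t := by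
      intro t _
      have h1 : HasDerivAt (fun t : ℝ => Real.exp (-(2*α)*t))
          (Real.exp (-(2*α)*t) * (-(2*α))) t := by
        simpa using ((hasDerivAt_id t).const_mul (-(2*α))).exp
      have h2 : HasDerivAt (fun t : ℝ => Real.exp (-(2*α)*(T-t)))
          (Real.exp (-(2*α)*(T-t)) * (-(2*α) * (0 - 1))) t :=
        (((hasDerivAt_const t T).sub (hasDerivAt_id t)).const_mul (-(2*α))).exp
      have := ((h1.const_mul (-(1/(2*α)))).sub
        (((hasDerivAt_id t).const_mul (2*Real.exp (-α*T))))).add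
        (h2.const_mul (1/(2*α)))
      refine this.congr_deriv ?_
      have e1 := hsq1 t
      have e2 := hsq2 t
      have e3 := hmul t
      have hα' : α ≠ 0 := ne_of_gt hα
      field_simp
      ring_nf
      ring_nf at e1 e2 e3
      nlinarith [e1, e2, e3]
    have hcont : IntervalIntegrable
        (fun t => (Real.exp (-α*t) - Real.exp (-α*(T-t)))^2)
        MeasureTheory.volume 0 T := by
      apply Continuous.intervalIntegrable
      fun_prop
    rw [intervalIntegral.integral_eq_sub_of_hasDerivAt hF hcont]
    have hs : Real.sinh (α*T) = (Real.exp (α*T) - Real.exp (-(α*T)))/2 := Real.sinh_eq _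
    have he : Real.exp (-(2*α)*T) = Real.exp (-α*T) * Real.exp (-α*T) := by
      rw [← Real.exp_add]; ring_nf
    have he2 : Real.exp (-α*T) * Real.exp (α*T) = 1 := by
      rw [← Real.exp_add]; simp
    have hα' : α ≠ 0 := ne_of_gt hα
    rw [hs]
    have : Real.exp (-(α*T)) = Real.exp (-α*T) := by ring_nf
    rw [this]
    simp only [sub_self, sub_zero, mul_zero, Real.exp_zero, he]
    have he2' : Real.exp (-(α*T)) * Real.exp (α*T) = 1 := by
      rw [← Real.exp_add]; simp
    field_simp
    linear_combination (-2) * he2'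
  rw [hI1, hI2]
  have hpos : 0 < Real.sinh (α*T) - α*T := by
    have := Real.self_lt_sinh_iff.mpr (by positivity : 0 < α*T)
    linarith
  field_simp
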